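/- Every projective generalised probabilistic logic program satisfies the (semantic) Strong Independence Property: if φ and ψ are sets of L-structures on a finite domain D that semantically mention no common (g+1)-element tuple, and θ is a semantic g-ary trace on D with (P,Π)_D(θ) > 0, then (P,Π)_D(φ ∩ ψ | θ) = (P,Π)_D(φ | θ) · (P,Π)_D(ψ | θ). -/

import Mathlib

abbrev Str (L : Type) (ar : L → ℕ) (A : Type) : Type :=
  ∀ R : L, (Fin (ar R) → A) → Bool

noncomputable def freeP {L A : Type} [Fintype L] [Fintype A]
    (ar : L → ℕ) (w : L → ℝ) (ω : Str L ar A) : ℝ :=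
  ∏ R : L, ∏ a : Fin (ar R) → A, if ω R a then w R else 1 - w R

/-- The pullback of a structure on `B` along a map `ι : A → B`. -/
def restr {L : Type} {ar : L → ℕ} {A B : Type} (ι : A → B)
    (ω : Str L ar B) : Str L ar A :=
  fun R a => ω R (ι ∘ a)

open scoped Classical in
noncomputable def Pr {X : Type} [Fintype X] (μ : X → ℝ) (E : Set X) : ℝ :=
  ∑ x : X, if x ∈ E then μ x else 0

section Expansions

variable {L : Type} (ar : L → ℕ) (free : L → Prop)

/-- The arity function of the subsignature `L' = {R // free R} ⊆ L`. -/
abbrev ar' : {R : L // free R} → ℕ := fun R => ar R.1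

/-- The reduct of an `L`-structure to the subsignature `L'`. -/
def red {A : Type} (ω : Str L ar A) : Str {R : L // free R} (ar' ar free) A :=
  fun R a => ω R.1 a

/-- Restriction of a structure to a subset of a `Finset ℕ` domain. -/
def restrSub {L₀ : Type} {ar₀ : L₀ → ℕ} {s t : Finset ℕ} (h : s ⊆ t)
    (ω : Str L₀ ar₀ ↥t) : Str L₀ ar₀ ↥s :=
  restr (fun x : ↥s => (⟨x.1, h x.2⟩ : ↥t)) ω

/-- A choice of expansions from `L'` to `L`: to each `L'`-structure on a finite
domain it assigns an `L`-structure on the same domain whose `L'`-reduct is it. -/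
def IsExpansion (Pi : ∀ s : Finset ℕ, Str {R : L // free R} (ar' ar free) ↥s → Str L ar ↥s) : Prop :=
  ∀ (s : Finset ℕ) (ω : Str {R : L // free R} (ar' ar free) ↥s), red ar free (Pi s ω) = ω

/-- `Π` commutes with restrictions along subset inclusions. -/
def CommutesSub (Pi : ∀ s : Finset ℕ, Str {R : L // free R} (ar' ar free) ↥s → Str L ar ↥s) : Prop :=
  ∀ (s t : Finset ℕ) (h : s ⊆ t) (ω : Str {R : L // free R} (ar' ar free) ↥t),
    Pi s (restrSub h ω) = restrSub h (Pi t ω)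

/-- `Π` commutes with restrictions along arbitrary injections. -/
def CommutesInj (Pi : ∀ s : Finset ℕ, Str {R : L // free R} (ar' ar free) ↥s → Str L ar ↥s) : Prop :=
  ∀ (s t : Finset ℕ) (ι : ↥s → ↥t), Function.Injective ι →
    ∀ ω : Str {R : L // free R} (ar' ar free) ↥t, Pi s (restr ι ω) = restr ι (Pi t ω)

end Expansions

def SemMentionsD {L₀ : Type} {ar₀ : L₀ → ℕ} {D : Finset ℕ} {n : ℕ}
    (Φ : Set (Str L₀ ar₀ ↥D)) (a : Fin n → ↥D) : Prop :=
  ∃ ω₁ ∈ Φ, ∃ ω₂ ∉ Φ,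
    ∀ (s : Finset ℕ) (h : s ⊆ D), (∃ i, (a i : ℕ) ∉ s) →
      restrSub h ω₁ = restrSub h ω₂

def SemTrace {L₀ : Type} {ar₀ : L₀ → ℕ} {D : Finset ℕ} (g : ℕ)
    (ω : Str L₀ ar₀ ↥D) : Set (Str L₀ ar₀ ↥D) :=
  {ω' | ∀ (s : Finset ℕ) (h : s ⊆ D), s.card ≤ g →
    restrSub h ω' = restrSub h ω}

/-- Conditional probability for a set function. -/
noncomputable def CondOf {X : Type} (Q : Set X → ℝ) (E F : Set X) : ℝ :=
  Q (E ∩ F) / Q F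

section SIPAux

lemma sum_prod_bool {κ : Type} [Fintype κ] [DecidableEq κ] (F : κ → Bool → ℝ)
    (hF : ∀ i, F i true + F i false = 1) :
    ∑ v : κ → Bool, ∏ i, F i (v i) = 1 := by
  rw [← Fintype.prod_sum]
  simp only [Fintype.sum_bool, hF]
  exact Finset.prod_const_one

lemma Pr_equiv' {X Y : Type} [Fintype X] [Fintype Y] (e : X ≃ Y) (μ : Y → ℝ) (E : Set Y) :
    Pr μ E = Pr (fun x => μ (e x)) (e ⁻¹' E) := by
  classical
  unfold Pr
  rw [← Equiv.sum_comp e (fun y => if y ∈ E then μ y else 0)]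
  simp [Set.mem_preimage]

lemma Pr_pos_nonempty {X : Type} [Fintype X] (μ : X → ℝ) (E : Set X)
    (h : 0 < Pr μ E) : ∃ x, x ∈ E := by
  classical
  by_contra hc
  push_neg at hc
  have h0 : Pr μ E = 0 := by
    unfold Pr
    exact Finset.sum_eq_zero (fun x _ => if_neg (hc x))
  rw [h0] at h; exact lt_irrefl 0 h

lemma indep_core {κ : Type} [Fintype κ] [DecidableEq κ] (F : κ → Bool → ℝ)
    (hF : ∀ i, F i true + F i false = 1)
    (p : κ → Prop) [DecidablePred p]
    (A B : Set (κ → Bool))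
    (hA : ∀ x y : κ → Bool, (∀ i, p i → x i = y i) → x ∈ A → y ∈ A)
    (hB : ∀ x y : κ → Bool, (∀ i, ¬ p i → x i = y i) → x ∈ B → y ∈ B) :
    Pr (fun x => ∏ i, F i (x i)) (A ∩ B)
      = Pr (fun x => ∏ i, F i (x i)) A * Pr (fun x => ∏ i, F i (x i)) B := by
  classical
  set e := (Equiv.piEquivPiSubtypeProd p (fun _ => Bool)).symm with he
  have hcoord : ∀ (u : {x // p x} → Bool) (v : {x // ¬ p x} → Bool) (i : κ),
      e (u, v) i = if h : p i then u ⟨i, h⟩ else v ⟨i, h⟩ := by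
    intro u v i
    exact Equiv.piEquivPiSubtypeProd_symm_apply p (fun _ => Bool) (u, v) i
  have hmu : ∀ (u : {x // p x} → Bool) (v : {x // ¬ p x} → Bool),
      (∏ i, F i (e (u, v) i))
        = (∏ i : {x // p x}, F i.1 (u i)) * (∏ i : {x // ¬ p x}, F i.1 (v i)) := by
    intro u v
    rw [← Fintype.prod_subtype_mul_prod_subtype p (fun i => F i (e (u, v) i))]
    congr 1
    · exact Finset.prod_congr rfl (fun i _ => by rw [hcoord]; rw [dif_pos i.2])
    · exact Finset.prod_congr rfl (fun i _ => by rw [hcoord]; rw [dif_neg i.2])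
  set a : ({x // p x} → Bool) → Prop := fun u => e (u, fun _ => true) ∈ A with ha
  set b : ({x // ¬ p x} → Bool) → Prop := fun v => e ((fun _ => true), v) ∈ B with hb
  have hAmem : ∀ u v, e (u, v) ∈ A ↔ a u := by
    intro u v
    constructor
    · intro h; exact hA _ _ (fun i hi => by rw [hcoord, hcoord, dif_pos hi, dif_pos hi]) h
    · intro h; exact hA _ _ (fun i hi => by rw [hcoord, hcoord, dif_pos hi, dif_pos hi]) h
  have hBmem : ∀ u v, e (u, v) ∈ B ↔ b v := by
    intro u v
    constructor
    · intro h; exact hB _ _ (fun i hi => by rw [hcoord, hcoord, dif_neg hi, dif_neg hi]) h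
    · intro h; exact hB _ _ (fun i hi => by rw [hcoord, hcoord, dif_neg hi, dif_neg hi]) h
  have hsum : ∀ (E : Set (κ → Bool)),
      Pr (fun x => ∏ i, F i (x i)) E
        = ∑ u : {x // p x} → Bool, ∑ v : {x // ¬ p x} → Bool,
            (if e (u, v) ∈ E then (∏ i : {x // p x}, F i.1 (u i))
                * (∏ i : {x // ¬ p x}, F i.1 (v i)) else 0) := by
    intro E
    rw [Pr_equiv' e _ E]
    unfold Pr
    rw [Fintype.sum_prod_type]
    refine Finset.sum_congr rfl (fun u _ => Finset.sum_congr rfl (fun v _ => ?_))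
    simp only [Set.mem_preimage, hmu]
  have hone : (∑ v : {x // ¬ p x} → Bool, ∏ i : {x // ¬ p x}, F i.1 (v i)) = 1 :=
    sum_prod_bool _ (fun i => hF i.1)
  have hone' : (∑ u : {x // p x} → Bool, ∏ i : {x // p x}, F i.1 (u i)) = 1 :=
    sum_prod_bool _ (fun i => hF i.1)
  have hAB : Pr (fun x => ∏ i, F i (x i)) (A ∩ B)
      = (∑ u : {x // p x} → Bool, if a u then ∏ i : {x // p x}, F i.1 (u i) else 0)
        * (∑ v : {x // ¬ p x} → Bool, if b v then ∏ i : {x // ¬ p x}, F i.1 (v i) else 0) := by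
    rw [hsum, Finset.sum_mul_sum]
    refine Finset.sum_congr rfl (fun u _ => Finset.sum_congr rfl (fun v _ => ?_))
    rw [Set.mem_inter_iff, hAmem, hBmem]
    by_cases h1 : a u <;> by_cases h2 : b v <;> simp [h1, h2]
  have hA' : Pr (fun x => ∏ i, F i (x i)) A
      = (∑ u : {x // p x} → Bool, if a u then ∏ i : {x // p x}, F i.1 (u i) else 0) := by
    rw [hsum]
    have key : ∀ u : {x // p x} → Bool, (∑ v : {x // ¬ p x} → Bool,
        (if e (u, v) ∈ A then (∏ i : {x // p x}, F i.1 (u i))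
          * (∏ i : {x // ¬ p x}, F i.1 (v i)) else 0))
        = if a u then ∏ i : {x // p x}, F i.1 (u i) else 0 := by
      intro u
      by_cases h1 : a u
      · simp only [fun v => hAmem u v, h1, if_true]
        rw [← Finset.mul_sum, hone, mul_one]
      · simp [fun v => hAmem u v, h1]
    rw [Finset.sum_congr rfl (fun u _ => key u)]
  have hB' : Pr (fun x => ∏ i, F i (x i)) B
      = (∑ v : {x // ¬ p x} → Bool, if b v then ∏ i : {x // ¬ p x}, F i.1 (v i) else 0) := by
    rw [hsum, Finset.sum_comm]
    have key : ∀ v : {x // ¬ p x} → Bool, (∑ u : {x // p x} → Bool,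
        (if e (u, v) ∈ B then (∏ i : {x // p x}, F i.1 (u i))
          * (∏ i : {x // ¬ p x}, F i.1 (v i)) else 0))
        = if b v then ∏ i : {x // ¬ p x}, F i.1 (v i) else 0 := by
      intro v
      by_cases h1 : b v
      · simp only [fun u => hBmem u v, h1, if_true]
        rw [← Finset.sum_mul, hone', one_mul]
      · simp [fun u => hBmem u v, h1]
    rw [Finset.sum_congr rfl (fun v _ => key v)]
  rw [hAB, hA', hB']

end SIPAux

section SIPLayer2

variable {L : Type} (ar : L → ℕ) (free : L → Prop) (D : Finset ℕ)

abbrev AtomIdx : Type := (R : {R : L // free R}) × (Fin (ar' ar free R) → ↥D)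

def atomEquiv : (AtomIdx ar free D → Bool) ≃ Str {R : L // free R} (ar' ar free) ↥D :=
  Equiv.piCurry fun _ _ => Bool

variable {ar free D}

@[simp] lemma atomEquiv_apply (x : AtomIdx ar free D → Bool)
    (R : {R : L // free R}) (a : Fin (ar' ar free R) → ↥D) :
    atomEquiv ar free D x R a = x ⟨R, a⟩ := rfl

def asupp (i : AtomIdx ar free D) : Finset ↥D := Finset.image i.2 Finset.univ

lemma freeP_atom [Fintype L] [DecidableEq L] [DecidablePred free]
    (w : {R : L // free R} → ℝ) (x : AtomIdx ar free D → Bool) :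
    freeP (ar' ar free) w (atomEquiv ar free D x)
      = ∏ i : AtomIdx ar free D, (if x i then w i.1 else 1 - w i.1) := by
  classical
  unfold freeP
  rw [← Finset.univ_sigma_univ (ι := {R : L // free R})
        (κ := fun R => Fin (ar' ar free R) → ↥D),
      Finset.prod_sigma Finset.univ (fun _ => Finset.univ)
        (fun i : AtomIdx ar free D => if x i then w i.1 else 1 - w i.1)]
  rfl

lemma restrSub_agree {s : Finset ℕ} (h : s ⊆ D)
    (x y : AtomIdx ar free D → Bool)
    (hagree : ∀ i : AtomIdx ar free D, (∀ j, (i.2 j : ℕ) ∈ s) → x i = y i) :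
    restrSub h (atomEquiv ar free D x) = restrSub h (atomEquiv ar free D y) := by
  funext R a
  exact hagree ⟨R, fun j => ⟨(a j : ℕ), h (a j).2⟩⟩ (fun j => (a j).2)

lemma mem_asupp {i : AtomIdx ar free D} {d : ↥D} :
    d ∈ asupp i ↔ ∃ j, i.2 j = d := by
  unfold asupp
  simp [Finset.mem_image]

lemma asupp_card_le_of_mem_s {s : Finset ℕ} (i : AtomIdx ar free D)
    (hi : ∀ j, (i.2 j : ℕ) ∈ s) : (asupp i).card ≤ s.card := by
  classical
  apply Finset.card_le_card_of_injOn (fun d : ↥D => (d : ℕ))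
  · intro d hd
    rw [Finset.mem_coe, mem_asupp] at hd
    obtain ⟨j, rfl⟩ := hd
    exact hi j
  · intro a _ b _ hab
    exact Subtype.ext hab

end SIPLayer2

section SIPMain
set_option linter.unusedSectionVars false

variable {L : Type} [Fintype L] [DecidableEq L] {ar : L → ℕ}
  {free : L → Prop} [DecidablePred free]
  {Pi : ∀ s : Finset ℕ, Str {R : L // free R} (ar' ar free) ↥s → Str L ar ↥s}
  {D : Finset ℕ} {g : ℕ}

/-- Every injective `(g+1)`-tuple into the support of atom `i` is semantically
mentioned by `χ`. -/
def Ment (g : ℕ) (χ : Set (Str L ar ↥D)) (i : AtomIdx ar free D) : Prop :=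
  ∀ b : Fin (g + 1) → ↥D, Function.Injective b → (∀ j, b j ∈ asupp i) →
    SemMentionsD χ b

lemma flip_one (hcom : CommutesSub ar free Pi) (χ : Set (Str L ar ↥D))
    (x : AtomIdx ar free D → Bool) (i₀ : AtomIdx ar free D) (c : Bool)
    (hm : ¬ Ment g χ i₀) :
    (Pi D (atomEquiv ar free D x) ∈ χ
      ↔ Pi D (atomEquiv ar free D (Function.update x i₀ c)) ∈ χ) := by
  classical
  unfold Ment at hm
  push_neg at hm
  obtain ⟨b, hbinj, hbmem, hbnot⟩ := hm
  set x' := Function.update x i₀ c with hx'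
  have hagree : ∀ (s : Finset ℕ) (h : s ⊆ D), (∃ j, (b j : ℕ) ∉ s) →
      restrSub h (Pi D (atomEquiv ar free D x))
        = restrSub h (Pi D (atomEquiv ar free D x')) := by
    rintro s h ⟨j, hj⟩
    rw [← hcom s D h, ← hcom s D h]
    have heq : restrSub h (atomEquiv ar free D x) = restrSub h (atomEquiv ar free D x') := by
      apply restrSub_agree
      intro i hi
      have hne : i ≠ i₀ := by
        rintro rfl
        obtain ⟨k, hk⟩ := mem_asupp.mp (hbmem j)
        exact hj (hk ▸ hi k)
      rw [hx', Function.update_of_ne hne]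
    rw [heq]
  by_cases h1 : Pi D (atomEquiv ar free D x) ∈ χ
    <;> by_cases h2 : Pi D (atomEquiv ar free D x') ∈ χ
  · simp [h1, h2]
  · exact absurd ⟨_, h1, _, h2, hagree⟩ hbnot
  · exact absurd ⟨_, h2, _, h1, fun s h hj => (hagree s h hj).symm⟩ hbnot
  · simp [h1, h2]

lemma flip_all (hcom : CommutesSub ar free Pi) (χ : Set (Str L ar ↥D)) :
    ∀ (n : ℕ) (x y : AtomIdx ar free D → Bool),
      (Finset.univ.filter (fun i => x i ≠ y i)).card = n →
      (∀ i, Ment g χ i → x i = y i) →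
      (Pi D (atomEquiv ar free D x) ∈ χ ↔ Pi D (atomEquiv ar free D y) ∈ χ) := by
  classical
  intro n
  induction n with
  | zero =>
    intro x y hcard hxy
    have hxy' : x = y := by
      funext i
      by_contra hne
      have hmem : i ∈ Finset.univ.filter (fun i => x i ≠ y i) :=
        Finset.mem_filter.mpr ⟨Finset.mem_univ _, hne⟩
      rw [Finset.card_eq_zero] at hcard
      rw [hcard] at hmem
      exact absurd hmem (Finset.notMem_empty _)
    rw [hxy']
  | succ n ih =>
    intro x y hcard hxy
    have hne : (Finset.univ.filter (fun i => x i ≠ y i)).Nonempty := by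
      rw [← Finset.card_pos, hcard]; omega
    obtain ⟨i₀, hi₀⟩ := hne
    have hxi₀ : x i₀ ≠ y i₀ := (Finset.mem_filter.mp hi₀).2
    have hm : ¬ Ment g χ i₀ := fun h => hxi₀ (hxy i₀ h)
    have hstep := flip_one hcom χ x i₀ (y i₀) hm
    set z := Function.update x i₀ (y i₀) with hz
    have hset : (Finset.univ.filter (fun i => z i ≠ y i))
        = (Finset.univ.filter (fun i => x i ≠ y i)).erase i₀ := by
      ext i
      simp only [Finset.mem_filter, Finset.mem_erase, Finset.mem_univ, true_and]
      by_cases hii : i = i₀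
      · subst hii
        simp [hz, Function.update_self]
      · simp [hz, Function.update_of_ne hii, hii]
    have hcard' : (Finset.univ.filter (fun i => z i ≠ y i)).card = n := by
      rw [hset, Finset.card_erase_of_mem hi₀, hcard]
      omega
    have hagain : ∀ i, Ment g χ i → z i = y i := by
      intro i hM
      by_cases hii : i = i₀
      · subst hii
        simp [hz, Function.update_self]
      · rw [hz, Function.update_of_ne hii]
        exact hxy i hM
    exact hstep.trans (ih z y hcard' hagain)

lemma trace_agree (hcom : CommutesSub ar free Pi) (g : ℕ) (ω₀ : Str L ar ↥D)
    (x y : AtomIdx ar free D → Bool)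
    (hagree : ∀ i, (asupp i).card ≤ g → x i = y i)
    (hx : Pi D (atomEquiv ar free D x) ∈ SemTrace g ω₀) :
    Pi D (atomEquiv ar free D y) ∈ SemTrace g ω₀ := by
  intro s h hcard
  have h1 : restrSub h (atomEquiv ar free D x) = restrSub h (atomEquiv ar free D y) := by
    apply restrSub_agree
    intro i hi
    exact hagree i (le_trans (asupp_card_le_of_mem_s i hi) hcard)
  have h2 := hx s h hcard
  rw [← hcom s D h] at h2 ⊢
  rw [← h1]
  exact h2

lemma trace_char (hexp : IsExpansion ar free Pi) (hcom : CommutesSub ar free Pi)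
    (g : ℕ) (ω₀ : Str L ar ↥D) (x₀ x : AtomIdx ar free D → Bool)
    (hx₀ : Pi D (atomEquiv ar free D x₀) ∈ SemTrace g ω₀) :
    Pi D (atomEquiv ar free D x) ∈ SemTrace g ω₀ ↔
      (∀ i, (asupp i).card ≤ g → x i = x₀ i) := by
  classical
  constructor
  · intro hx i hi
    set s : Finset ℕ := (asupp i).image Subtype.val with hs
    have hsub : s ⊆ D := by
      intro m hm
      rw [hs, Finset.mem_image] at hm
      obtain ⟨d, _, rfl⟩ := hm
      exact d.2
    have hcards : s.card ≤ g := by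
      rw [hs, Finset.card_image_of_injective _ Subtype.val_injective]
      exact hi
    have h1 := hx s hsub hcards
    have h2 := hx₀ s hsub hcards
    have h3 : restrSub hsub (atomEquiv ar free D x)
        = restrSub hsub (atomEquiv ar free D x₀) := by
      have h4 : Pi s (restrSub hsub (atomEquiv ar free D x))
          = Pi s (restrSub hsub (atomEquiv ar free D x₀)) := by
        rw [hcom s D hsub, hcom s D hsub, h1, h2]
      have h5 := congrArg (red ar free) h4
      rwa [hexp s, hexp s] at h5
    have hmem : ∀ j, ((i.2 j : ↥D) : ℕ) ∈ s := by
      intro j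
      rw [hs]
      exact Finset.mem_image_of_mem _ (mem_asupp.mpr ⟨j, rfl⟩)
    exact congrFun (congrFun h3 i.1) (fun j => (⟨(i.2 j : ℕ), hmem j⟩ : ↥s))
  · intro hagree
    exact trace_agree hcom g ω₀ x₀ x (fun i hi => (hagree i hi).symm) hx₀

end SIPMain

/-- every projective generalised probabilistic logic program
satisfies the semantic Strong Independence Property: events that semantically
mention no common `(g+1)`-tuple are conditionally independent given any
semantic `g`-ary trace of positive probability. -/
theorem stmt11 {L : Type} [Fintype L] [DecidableEq L] (ar : L → ℕ)
    (r : ℕ) (hr : ∀ R : L, ar R ≤ r)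
    (free : L → Prop) [DecidablePred free]
    (w : {R : L // free R} → ℝ) (hw : ∀ R, 0 < w R ∧ w R < 1)
    (Pi : ∀ s : Finset ℕ, Str {R : L // free R} (ar' ar free) ↥s → Str L ar ↥s)
    (hexp : IsExpansion ar free Pi)
    (hcom : CommutesSub ar free Pi)
    (g : ℕ) (hg : g < r)
    (D : Finset ℕ) (φ ψ : Set (Str L ar ↥D))
    (hmen : ∀ a : Fin (g + 1) → ↥D, Function.Injective a →
      ¬ (SemMentionsD φ a ∧ SemMentionsD ψ a))
    (ω₀ : Str L ar ↥D)
    (Q : Set (Str L ar ↥D) → ℝ)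
    (hQ : ∀ E, Q E = Pr (freeP (ar' ar free) w) ((Pi D) ⁻¹' E))
    (hpos : 0 < Q (SemTrace g ω₀)) :
    CondOf Q (φ ∩ ψ) (SemTrace g ω₀)
      = CondOf Q φ (SemTrace g ω₀) * CondOf Q ψ (SemTrace g ω₀) := by
  classical
  set F : AtomIdx ar free D → Bool → ℝ := fun i b => if b then w i.1 else 1 - w i.1 with hFdef
  have hFsum : ∀ i : AtomIdx ar free D, F i true + F i false = 1 := by
    intro i; simp [hFdef]
  set μ : (AtomIdx ar free D → Bool) → ℝ := fun x => ∏ i, F i (x i) with hμdef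
  have hQ' : ∀ S : Set (Str L ar ↥D),
      Q S = Pr μ {x | Pi D (atomEquiv ar free D x) ∈ S} := by
    intro S
    rw [hQ S, Pr_equiv' (atomEquiv ar free D)]
    have h1 : (fun x => freeP (ar' ar free) w (atomEquiv ar free D x)) = μ := by
      funext x
      rw [freeP_atom]
    rw [h1]
    rfl
  have hposθ : 0 < Pr μ {x | Pi D (atomEquiv ar free D x) ∈ SemTrace g ω₀} := by
    rw [← hQ']
    exact hpos
  obtain ⟨x₀, hx₀⟩ := Pr_pos_nonempty _ _ hposθ
  have hx₀' : Pi D (atomEquiv ar free D x₀) ∈ SemTrace g ω₀ := hx₀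
  set pφ : AtomIdx ar free D → Prop :=
    fun i => ¬ (asupp i).card ≤ g ∧ Ment g φ i with hpφ
  set pψ : AtomIdx ar free D → Prop :=
    fun i => ¬ (asupp i).card ≤ g ∧ Ment g ψ i with hpψ
  have hdisj : ∀ i, pφ i → ¬ pψ i := by
    rintro i ⟨hns, hmφ⟩ ⟨-, hmψ⟩
    have hcard : g + 1 ≤ (asupp i).card := by omega
    obtain ⟨B, hBsub, hBcard⟩ := Finset.exists_subset_card_eq hcard
    set b : Fin (g + 1) → ↥D :=
      fun j => (B.equivFin.symm (Fin.cast hBcard.symm j) : ↥D) with hb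
    have binj : Function.Injective b := by
      intro j k hjk
      have h1 : B.equivFin.symm (Fin.cast hBcard.symm j)
          = B.equivFin.symm (Fin.cast hBcard.symm k) := Subtype.ext hjk
      have h2 := B.equivFin.symm.injective h1
      exact Fin.cast_injective _ h2
    have bmem : ∀ j, b j ∈ asupp i :=
      fun j => hBsub (B.equivFin.symm (Fin.cast hBcard.symm j)).2
    exact hmen b binj ⟨hmφ b binj bmem, hmψ b binj bmem⟩
  set sub : (AtomIdx ar free D → Bool) → (AtomIdx ar free D → Bool) :=
    fun x i => if (asupp i).card ≤ g then x₀ i else x i with hsubdef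
  set Aφ : Set (AtomIdx ar free D → Bool) :=
    {x | Pi D (atomEquiv ar free D (sub x)) ∈ φ} with hAφ
  set Aψ : Set (AtomIdx ar free D → Bool) :=
    {x | Pi D (atomEquiv ar free D (sub x)) ∈ ψ} with hAψ
  set Tset : Set (AtomIdx ar free D → Bool) :=
    {x | Pi D (atomEquiv ar free D x) ∈ SemTrace g ω₀} with hTdef
  have hTchar : ∀ x, x ∈ Tset ↔ ∀ i, (asupp i).card ≤ g → x i = x₀ i :=
    fun x => trace_char hexp hcom g ω₀ x₀ x hx₀'
  have hsubT : ∀ x ∈ Tset, sub x = x := by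
    intro x hx
    funext i
    by_cases hi : (asupp i).card ≤ g
    · simp only [hsubdef, if_pos hi]
      exact (((hTchar x).mp hx) i hi).symm
    · simp only [hsubdef, if_neg hi]
  have hdetφ : ∀ x y, (∀ i, pφ i → x i = y i) → x ∈ Aφ → y ∈ Aφ := by
    intro x y hxy hx
    have hag : ∀ i, Ment g φ i → sub x i = sub y i := by
      intro i hM
      by_cases hi : (asupp i).card ≤ g
      · simp only [hsubdef, if_pos hi]
      · simp only [hsubdef, if_neg hi]
        exact hxy i ⟨hi, hM⟩
    exact (flip_all hcom φ _ (sub x) (sub y) rfl hag).mp hx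
  have hdetψ : ∀ x y, (∀ i, pψ i → x i = y i) → x ∈ Aψ → y ∈ Aψ := by
    intro x y hxy hx
    have hag : ∀ i, Ment g ψ i → sub x i = sub y i := by
      intro i hM
      by_cases hi : (asupp i).card ≤ g
      · simp only [hsubdef, if_pos hi]
      · simp only [hsubdef, if_neg hi]
        exact hxy i ⟨hi, hM⟩
    exact (flip_all hcom ψ _ (sub x) (sub y) rfl hag).mp hx
  have hdetT : ∀ x y, (∀ i, (asupp i).card ≤ g → x i = y i) → x ∈ Tset → y ∈ Tset :=
    fun x y hxy hx => trace_agree hcom g ω₀ x y hxy hx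
  have i1 : Pr μ (Aφ ∩ (Aψ ∩ Tset)) = Pr μ Aφ * Pr μ (Aψ ∩ Tset) := by
    refine indep_core F hFsum pφ _ _ hdetφ ?_
    rintro x y hxy ⟨h1, h2⟩
    constructor
    · refine hdetψ x y ?_ h1
      intro i hpsi
      exact hxy i (fun hp => hdisj i hp hpsi)
    · refine hdetT x y ?_ h2
      intro i hi
      exact hxy i (fun hp => hp.1 hi)
  have i2 : Pr μ (Aφ ∩ Tset) = Pr μ Aφ * Pr μ Tset := by
    refine indep_core F hFsum pφ _ _ hdetφ ?_
    intro x y hxy h2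
    refine hdetT x y ?_ h2
    intro i hi
    exact hxy i (fun hp => hp.1 hi)
  have hsetsφψ : {x | Pi D (atomEquiv ar free D x) ∈ (φ ∩ ψ) ∩ SemTrace g ω₀}
      = Aφ ∩ (Aψ ∩ Tset) := by
    ext x
    simp only [Set.mem_setOf_eq, Set.mem_inter_iff, hAφ, hAψ]
    constructor
    · rintro ⟨⟨h1, h2⟩, h3⟩
      have hsx : sub x = x := hsubT x h3
      exact ⟨by rw [hsx]; exact h1, by rw [hsx]; exact h2, h3⟩
    · rintro ⟨h1, h2, h3⟩
      have hsx : sub x = x := hsubT x h3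
      rw [hsx] at h1 h2
      exact ⟨⟨h1, h2⟩, h3⟩
  have hsetφ : {x | Pi D (atomEquiv ar free D x) ∈ φ ∩ SemTrace g ω₀} = Aφ ∩ Tset := by
    ext x
    simp only [Set.mem_setOf_eq, Set.mem_inter_iff, hAφ]
    constructor
    · rintro ⟨h1, h3⟩
      have hsx : sub x = x := hsubT x h3
      exact ⟨by rw [hsx]; exact h1, h3⟩
    · rintro ⟨h1, h3⟩
      have hsx : sub x = x := hsubT x h3
      rw [hsx] at h1
      exact ⟨h1, h3⟩
  have hsetψ : {x | Pi D (atomEquiv ar free D x) ∈ ψ ∩ SemTrace g ω₀} = Aψ ∩ Tset := by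
    ext x
    simp only [Set.mem_setOf_eq, Set.mem_inter_iff, hAψ]
    constructor
    · rintro ⟨h1, h3⟩
      have hsx : sub x = x := hsubT x h3
      exact ⟨by rw [hsx]; exact h1, h3⟩
    · rintro ⟨h1, h3⟩
      have hsx : sub x = x := hsubT x h3
      rw [hsx] at h1
      exact ⟨h1, h3⟩
  have hQθ : Q (SemTrace g ω₀) = Pr μ Tset := hQ' _
  have hQφψ : Q ((φ ∩ ψ) ∩ SemTrace g ω₀) = Pr μ (Aφ ∩ (Aψ ∩ Tset)) := by
    rw [hQ', hsetsφψ]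
  have hQφ : Q (φ ∩ SemTrace g ω₀) = Pr μ (Aφ ∩ Tset) := by
    rw [hQ', hsetφ]
  have hQψ : Q (ψ ∩ SemTrace g ω₀) = Pr μ (Aψ ∩ Tset) := by
    rw [hQ', hsetψ]
  have hneθ : Q (SemTrace g ω₀) ≠ 0 := ne_of_gt hpos
  have key : Q ((φ ∩ ψ) ∩ SemTrace g ω₀) * Q (SemTrace g ω₀)
      = Q (φ ∩ SemTrace g ω₀) * Q (ψ ∩ SemTrace g ω₀) := by
    rw [hQφψ, hQθ, hQφ, hQψ, i1, i2]
    ring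
  unfold CondOf
  rw [div_mul_div_comm, div_eq_div_iff hneθ (mul_ne_zero hneθ hneθ)]
  linear_combination Q (SemTrace g ω₀) * key
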